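/- Let φ₁(t) = cosh((2⌊t/(2π)⌋ + 1)π - t)/cosh(π). Then for every fixed real t, lim_{n→∞} φ₁(t/n)^n = e^{-|t|·tanh(π)}. -/

import Mathlib

open Real Filter Topology

noncomputable def phi1 (t : ℝ) : ℝ :=
  Real.cosh ((2 * ⌊t / (2 * π)⌋ + 1) * π - t) / Real.cosh π

lemma phi1_eq (s : ℝ) (hs : |s| < 2 * π) :
    phi1 s = Real.cosh (π - |s|) / Real.cosh π := by
  have hπ := Real.pi_pos
  rcases le_or_gt 0 s with h | h
  · have hfl : ⌊s / (2 * π)⌋ = 0 := by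
      rw [Int.floor_eq_zero_iff]
      constructor
      · exact div_nonneg h (by positivity)
      · rw [div_lt_one (by positivity)]
        simpa [abs_of_nonneg h] using hs
    simp [phi1, hfl, abs_of_nonneg h]
  · have h2 : -(2 * π) < s := by
      have := (abs_lt.mp hs).1; linarith
    have hfl : ⌊s / (2 * π)⌋ = -1 := by
      rw [Int.floor_eq_iff]
      constructor
      · push_cast
        rw [le_div_iff₀ (by positivity)]
        linarith
      · push_cast
        rw [div_lt_iff₀ (by positivity)]
        linarith
    have he : ((2 * (-1 : ℤ) + 1 : ℤ) : ℝ) * π - s = -(π + s) := by push_cast; ring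
    rw [phi1, hfl]
    push_cast
    rw [show (2 * (-1 : ℝ) + 1) * π - s = -(π + s) by ring, Real.cosh_neg,
      abs_of_neg h]
    ring_nf

theorem stmt_8 (t : ℝ) :
    Tendsto (fun n : ℕ => (phi1 (t / n)) ^ n) atTop
      (nhds (Real.exp (-|t| * Real.tanh π))) := by
  rcases eq_or_ne t 0 with rfl | ht
  · have h0 : phi1 0 = 1 := by
      rw [phi1_eq 0 (by rw [abs_zero]; positivity)]
      simp [div_self (Real.cosh_pos π).ne']
    simpa [h0] using tendsto_const_nhds
  · have hπ := Real.pi_pos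
    have hpos : (0:ℝ) < |t| := abs_pos.mpr ht
    set h : ℝ → ℝ := fun x => Real.log (Real.cosh (π - x)) with hh
    have hderiv : HasDerivAt h (-Real.tanh π) 0 := by
      have h1 : HasDerivAt (fun x : ℝ => π - x) (-1) 0 := by
        simpa using (hasDerivAt_id (0:ℝ)).const_sub π
      have h2 : HasDerivAt (fun x : ℝ => Real.cosh (π - x)) (-Real.sinh π) 0 := by
        simpa [Function.comp_def] using (Real.hasDerivAt_cosh (π - 0)).comp 0 h1
      have h3 := h2.log (Real.cosh_pos _).ne'
      simpa [Real.tanh_eq_sinh_div_cosh, neg_div] using h3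
    have hslope := hasDerivAt_iff_tendsto_slope.mp hderiv
    have hdiv : Tendsto (fun n : ℕ => |t| / n) atTop (𝓝 0) :=
      tendsto_const_div_atTop_nhds_zero_nat |t|
    have hs : Tendsto (fun n : ℕ => |t| / n) atTop (𝓝[≠] (0:ℝ)) := by
      apply tendsto_nhdsWithin_of_tendsto_nhds_of_eventually_within _ hdiv
      filter_upwards [eventually_gt_atTop 0] with n hn
      exact (div_pos hpos (by exact_mod_cast hn)).ne'
    have h1 : Tendsto (fun n : ℕ => slope h 0 (|t| / n)) atTop (𝓝 (-Real.tanh π)) :=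
      hslope.comp hs
    have h2 : Tendsto (fun n : ℕ => |t| * slope h 0 (|t| / n)) atTop
        (𝓝 (-|t| * Real.tanh π)) := by
      have := h1.const_mul |t|
      simpa [mul_neg, neg_mul] using this
    have h3 : Tendsto (fun n : ℕ => (n : ℝ) * (h (|t| / n) - h 0)) atTop
        (𝓝 (-|t| * Real.tanh π)) := by
      apply h2.congr'
      filter_upwards [eventually_gt_atTop 0] with n hn
      have hn' : (n:ℝ) ≠ 0 := Nat.cast_ne_zero.mpr hn.ne'
      rw [slope_def_field]
      have ht' : |t| ≠ 0 := hpos.ne'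
      field_simp
      ring_nf
      field_simp
    have h4 := (Real.continuous_exp.tendsto _).comp h3
    apply h4.congr'
    have hev : ∀ᶠ n : ℕ in atTop, |t| / n < 2 * π := by
      have : (0:ℝ) < 2 * π := by positivity
      exact hdiv.eventually (eventually_lt_nhds this) -- guess
    filter_upwards [eventually_gt_atTop 0, hev] with n hn hlt
    have hn' : (n:ℝ) ≠ 0 := Nat.cast_ne_zero.mpr hn.ne'
    have habs : |t / n| = |t| / n := by
      rw [abs_div, Nat.abs_cast]
    have hA : 0 < Real.cosh (π - |t| / n) := Real.cosh_pos _
    have hB : 0 < Real.cosh π := Real.cosh_pos _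
    have hlog : h (|t| / n) - h 0 = Real.log (Real.cosh (π - |t| / n) / Real.cosh π) := by
      simp [hh, Real.log_div hA.ne' hB.ne']
    simp only [Function.comp_apply]
    rw [hlog, Real.exp_nat_mul, Real.exp_log (div_pos hA hB), phi1_eq (t / n) (habs ▸ hlt),
      habs]
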